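/- arXiv:2505.19661 — 2 statements merged into one kernel-verified Lean document; each statement's English description precedes it below -/
import Mathlib

section
/- If ω is an anti-involution on an associative unital superalgebra A, then the map ω̃ defined on the superalgebra of pseudo-differential operators A((z^{-1},∂_z^{-1})) by ω̃(a z^i ∂_z^j) = ω(a) z^j ∂_z^i (for a ∈ A and i,j ∈ ℤ) is an anti-involution: ω̃^2 = id and ω̃(PQ) = ω̃(Q)ω̃(P) for all pseudo-differential operators P, Q. -/
/-- The integer-valued generalized binomial coefficient `C(j,m) = j(j-1)⋯(j-m+1)/m!`. -/
def intBinom (j : ℤ) (m : ℕ) : ℤ :=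
  (∏ t ∈ Finset.range m, (j - t)) / (m.factorial : ℤ)

namespace PDO

variable {A : Type*} [Ring A]

/-- A pseudo-differential operator `∑ a_{ij} z^i ∂_z^j` is encoded by its coefficient
function `ℤ × ℤ → A`; membership in `A((z⁻¹, ∂_z⁻¹))` means the support is bounded above
in both variables. -/
def BoundedAbove (f : ℤ × ℤ → A) : Prop :=
  ∃ r s : ℤ, ∀ i j : ℤ, (r < i ∨ s < j) → f (i, j) = 0

/-- The product of pseudo-differential operators, determined by the rule
`∂_z^j z^k = ∑_{m≥0} C(j,m) C(k,m) m! z^{k-m} ∂_z^{j-m}` (for coefficient functions with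
support bounded above, each coefficient of the product is a finite sum). -/
noncomputable def mul (f g : ℤ × ℤ → A) : ℤ × ℤ → A := fun p =>
  ∑ᶠ (i : ℤ) (j : ℤ) (m : ℕ),
    (intBinom j m * intBinom (p.1 + m - i) m * (m.factorial : ℤ)) •
      (f (i, j) * g (p.1 + m - i, p.2 + m - j))

/-- The extension `ω̃` of an anti-involution `ω` of `A`, determined by
`ω̃(a z^i ∂_z^j) = ω(a) z^j ∂_z^i`. -/
def transpose (ω : A → A) (f : ℤ × ℤ → A) : ℤ × ℤ → A := fun p => ω (f (p.2, p.1))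

end PDO

/-- If `ω` is an anti-involution of an associative unital (super)algebra `A`, then the map
`ω̃` on pseudo-differential operators `A((z⁻¹, ∂_z⁻¹))` defined by
`ω̃(a z^i ∂_z^j) = ω(a) z^j ∂_z^i` is an anti-involution: `ω̃² = id` and
`ω̃(PQ) = ω̃(Q) ω̃(P)`. -/
theorem pdo_transpose_anti_involution (A : Type*) [Ring A] (ω : A → A)
    (hadd : ∀ a b : A, ω (a + b) = ω a + ω b)
    (hmul : ∀ a b : A, ω (a * b) = ω b * ω a)
    (hinv : ∀ a : A, ω (ω a) = a) :
    (∀ f : ℤ × ℤ → A, PDO.transpose ω (PDO.transpose ω f) = f) ∧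
    (∀ f g : ℤ × ℤ → A, PDO.BoundedAbove f → PDO.BoundedAbove g →
      PDO.transpose ω (PDO.mul f g) =
        PDO.mul (PDO.transpose ω g) (PDO.transpose ω f)) := by
  -- ω as an additive monoid hom
  set Ω : A →+ A := AddMonoidHom.mk' ω hadd with hΩ
  have hΩapp : ∀ a, Ω a = ω a := fun a => rfl
  have hωinj : Function.Injective ω := Function.LeftInverse.injective hinv
  have hω0 : ω 0 = 0 := Ω.map_zero
  have omega_finsum : ∀ {ι : Type} (F : ι → A), ω (∑ᶠ x, F x) = ∑ᶠ x, ω (F x) := by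
    intro ι F
    exact Ω.map_finsum_of_injective hωinj F
  have omega_smul : ∀ (c : ℤ) (a : A), ω (c • a) = c • ω a := fun c a => Ω.map_zsmul c a
  constructor
  · intro f
    funext p
    simp [PDO.transpose, hinv]
  · intro f g hf hg
    funext p
    -- the transformed summand
    set G : ℤ × ℤ × ℕ → A := fun x =>
      (intBinom x.2.1 x.2.2 * intBinom (p.2 + x.2.2 - x.1) x.2.2 * (x.2.2.factorial : ℤ)) •
        (ω (g (p.2 + x.2.2 - x.1, p.1 + x.2.2 - x.2.1)) * ω (f (x.1, x.2.1))) with hG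
    have hGfin : (Function.support G).Finite := by
      obtain ⟨rf, sf, hf⟩ := hf
      obtain ⟨rg, sg, hg⟩ := hg
      apply Set.Finite.subset
        (Set.Finite.prod (Set.finite_Icc (p.2 - rg) rf)
          (Set.Finite.prod (Set.finite_Icc (p.1 - sg) sf)
            (Set.finite_Iic (rg + rf - p.2).toNat)))
      rintro ⟨i, j, m⟩ hx
      simp only [Function.mem_support, hG] at hx
      have hfne : f (i, j) ≠ 0 := by
        intro h; apply hx; simp [h, hω0]
      have hgne : g (p.2 + m - i, p.1 + m - j) ≠ 0 := by
        intro h; apply hx; simp [h, hω0]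
      have hif : ¬(rf < i ∨ sf < j) := fun hc => hfne (hf _ _ hc)
      have hig : ¬(rg < p.2 + m - i ∨ sg < p.1 + m - j) := fun hc => hgne (hg _ _ hc)
      push_neg at hif hig
      simp only [Set.mem_prod, Set.mem_Icc, Set.mem_Iic]
      refine ⟨⟨?_, ?_⟩, ⟨?_, ?_⟩, ?_⟩ <;> omega
    -- the reindexing equivalence
    set E : ℤ × ℤ × ℕ ≃ ℤ × ℤ × ℕ :=
      { toFun := fun x => (p.2 + x.2.2 - x.2.1, p.1 + x.2.2 - x.1, x.2.2)
        invFun := fun y => (p.1 + y.2.2 - y.2.1, p.2 + y.2.2 - y.1, y.2.2)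
        left_inv := by rintro ⟨i, j, m⟩; simp
        right_inv := by rintro ⟨i, j, m⟩; simp } with hE
    calc PDO.transpose ω (PDO.mul f g) p
        = ω (PDO.mul f g (p.2, p.1)) := rfl
      _ = ∑ᶠ (i : ℤ) (j : ℤ) (m : ℕ), G (i, j, m) := by
          rw [PDO.mul]
          rw [omega_finsum]
          refine finsum_congr fun i => ?_
          rw [omega_finsum]
          refine finsum_congr fun j => ?_
          rw [omega_finsum]
          refine finsum_congr fun m => ?_
          rw [omega_smul, hmul]
      _ = ∑ᶠ x, G x := (finsum_curry₃ G hGfin).symm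
      _ = ∑ᶠ x, G (E x) := (finsum_comp_equiv E).symm
      _ = ∑ᶠ (i : ℤ) (j : ℤ) (m : ℕ), G (E (i, j, m)) :=
          finsum_curry₃ (fun x => G (E x)) (hGfin.preimage E.injective.injOn)
      _ = PDO.mul (PDO.transpose ω g) (PDO.transpose ω f) p := by
          rw [PDO.mul]
          refine finsum_congr fun i => finsum_congr fun j => finsum_congr fun m => ?_
          simp only [hG, hE, Equiv.coe_fn_mk, PDO.transpose]
          have h1 : p.2 + (m : ℤ) - (p.2 + m - j) = j := by ring
          have h2 : p.1 + (m : ℤ) - (p.1 + m - i) = i := by ring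
          rw [h1, h2, mul_comm (intBinom (p.1 + m - i) m) (intBinom j m)]
end

section
/- Let A be a finite-dimensional commutative associative unital ℂ-algebra with a nondegenerate symmetric bilinear form (·,·) satisfying (ab, c) = (a, bc) (i.e., A is Frobenius), acting faithfully and cyclically on a finite-dimensional space V. If moreover the action is diagonalizable, then A has a simple spectrum on V: the simultaneous eigenspaces are one-dimensional and V is their direct sum. -/
open Module Polynomial

private lemma diag_isFinitelySemisimple {V : Type*} [AddCommGroup V] [Module ℂ V]
    [FiniteDimensional ℂ V] (f : Module.End ℂ V)
    (h : (⨆ μ : ℂ, Module.End.eigenspace f μ) = ⊤) : f.IsFinitelySemisimple := by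
  classical
  have hfin : Set.Finite f.HasEigenvalue := Module.End.finite_hasEigenvalue f
  set s : Finset ℂ := hfin.toFinset with hs
  have hann : ∀ (μ : ℂ), Module.End.eigenspace f μ ≤
      LinearMap.ker (aeval f (∏ ν ∈ s, (X - C ν))) := by
    intro μ x hx
    rcases eq_or_ne x 0 with rfl | hx0
    · simp
    · have hμ : μ ∈ s := by
        rw [hs]; refine hfin.mem_toFinset.mpr ?_
        exact Module.End.hasEigenvalue_of_hasEigenvector ⟨hx, hx0⟩
      rw [LinearMap.mem_ker, ← Finset.prod_erase_mul s _ hμ, map_mul]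
      have h0 : (aeval f (X - C μ)) x = 0 := by
        rw [map_sub, aeval_X, aeval_C]
        rw [LinearMap.sub_apply, Module.algebraMap_end_apply,
          Module.End.mem_eigenspace_iff.mp hx, sub_self]
      rw [Module.End.mul_apply, h0, map_zero]
  apply Module.End.IsSemisimple.isFinitelySemisimple
  apply Module.End.isSemisimple_of_squarefree_aeval_eq_zero
    (p := ∏ ν ∈ s, (X - C ν))
  · exact (Polynomial.separable_prod_X_sub_C_iff'.mpr
      (fun a _ b _ hab => hab)).squarefree
  · ext x
    have hx : x ∈ ⨆ μ : ℂ, Module.End.eigenspace f μ := h ▸ Submodule.mem_top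
    obtain ⟨c, hc, rfl⟩ := (Submodule.mem_iSup_iff_exists_finsupp _ _).mp hx
    rw [map_finsuppSum]
    simp only [LinearMap.zero_apply]
    rw [Finsupp.sum]
    exact Finset.sum_eq_zero fun μ _ => hann μ (hc μ)

/-- Let `A` be a finite-dimensional commutative associative unital ℂ-algebra equipped with
a nondegenerate symmetric associative bilinear form (so `A` is Frobenius), acting
faithfully and cyclically (via `ρ`) on a finite-dimensional space `V`.  If moreover every
operator in the image of `A` is diagonalizable, then `A` has a simple spectrum on `V`: the
simultaneous eigenspaces (indexed by characters `χ : A → ℂ`) are one-dimensional and `V`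
is their (internal) direct sum. -/
theorem frobenius_simple_spectrum
    (A : Type*) [CommRing A] [Algebra ℂ A] [FiniteDimensional ℂ A]
    [DecidableEq (A →ₐ[ℂ] ℂ)]
    (B : LinearMap.BilinForm ℂ A)
    (hsymm : ∀ a b : A, B a b = B b a)
    (hnondeg : ∀ a : A, (∀ b : A, B a b = 0) → a = 0)
    (hassoc : ∀ a b c : A, B (a * b) c = B a (b * c))
    (V : Type*) [AddCommGroup V] [Module ℂ V] [FiniteDimensional ℂ V]
    (ρ : A →ₐ[ℂ] Module.End ℂ V) (hfaith : Function.Injective ρ)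
    (hcyc : ∃ v : V, ∀ w : V, ∃ a : A, ρ a v = w)
    (hdiag : ∀ a : A, (⨆ μ : ℂ, Module.End.eigenspace (ρ a) μ) = ⊤) :
    (∀ χ : A →ₐ[ℂ] ℂ,
      Module.finrank ℂ (⨅ a : A, Module.End.eigenspace (ρ a) (χ a) : Submodule ℂ V) = 1) ∧
    DirectSum.IsInternal
      (fun χ : A →ₐ[ℂ] ℂ => (⨅ a : A, Module.End.eigenspace (ρ a) (χ a) : Submodule ℂ V)) := by
  classical
  obtain ⟨v, hv⟩ := hcyc
  set E : (A → ℂ) → Submodule ℂ V :=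
    fun χ => ⨅ a, Module.End.eigenspace (ρ a) (χ a) with hE
  set F : (A →ₐ[ℂ] ℂ) → Submodule ℂ V := fun χ => E ⇑χ with hF
  have hcomm : ∀ a b : A, Commute (ρ a) (ρ b) := by
    intro a b
    have : ρ (a * b) = ρ (b * a) := by rw [mul_comm]
    exact (by simpa only [map_mul] using this : ρ a * ρ b = ρ b * ρ a)
  have hmax : ∀ (a : A) (μ : ℂ),
      (ρ a).maxGenEigenspace μ = (ρ a).eigenspace μ := fun a μ =>
    (diag_isFinitelySemisimple (ρ a) (hdiag a)).maxGenEigenspace_eq_eigenspace μ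
  -- joint eigenspace membership gives eigenvector equations
  have hmemE : ∀ (χ : A → ℂ) (x : V), x ∈ E χ → ∀ a : A, ρ a x = χ a • x := by
    intro χ x hx a
    exact Module.End.mem_eigenspace_iff.mp ((Submodule.mem_iInf _).mp hx a)
  -- simultaneous diagonalization over all functions
  have htopfun : (⨆ χ : A → ℂ, E χ) = ⊤ := by
    have := Module.End.iSup_iInf_maxGenEigenspace_eq_top_of_iSup_maxGenEigenspace_eq_top_of_commute
      (fun a : A => ρ a) (fun a b _ => hcomm a b)
      (fun a => by simp only [hmax]; exact hdiag a)
    simpa only [hmax] using this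
  have hind : iSupIndep E := by
    have := Module.End.independent_iInf_maxGenEigenspace_of_forall_mapsTo
      (fun a : A => ρ a)
      (fun i j φ => Module.End.mapsTo_maxGenEigenspace_of_comm (hcomm j i) φ)
    simpa only [hE, hmax] using this
  have hindF : iSupIndep F := hind.comp (fun χ ψ h => DFunLike.coe_injective h)
  -- nonzero joint eigenspaces come from algebra homs
  have hhom : ∀ χ : A → ℂ, E χ ≠ ⊥ → ∃ χ' : A →ₐ[ℂ] ℂ, ⇑χ' = χ := by
    intro χ hbot
    obtain ⟨x, hx, hx0⟩ := (Submodule.ne_bot_iff _).mp hbot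
    have heig := hmemE χ x hx
    have hinj : Function.Injective (fun c : ℂ => c • x) :=
      smul_left_injective ℂ hx0
    refine ⟨⟨⟨⟨⟨χ, ?_⟩, ?_⟩, ?_, ?_⟩, ?_⟩, rfl⟩
    · -- map_one
      apply hinj
      simp only
      rw [← heig 1, map_one, Module.End.one_apply, one_smul]
    · -- map_mul
      intro a b
      apply hinj
      simp only
      rw [← heig (a * b), map_mul, Module.End.mul_apply, heig b, map_smul,
        heig a, mul_smul, smul_comm]
    · -- map_zero
      apply hinj
      simp only
      rw [← heig 0, map_zero, LinearMap.zero_apply, zero_smul]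
    · -- map_add
      intro a b
      apply hinj
      simp only
      rw [← heig (a + b), map_add, LinearMap.add_apply, heig a, heig b, add_smul]
    · -- commutes
      intro r
      apply hinj
      simp only
      rw [← heig (algebraMap ℂ A r), AlgHom.commutes, Module.algebraMap_end_apply]
      simp
  have htopF : (⨆ χ : A →ₐ[ℂ] ℂ, F χ) = ⊤ := by
    rw [eq_top_iff, ← htopfun]
    refine iSup_le fun χ => ?_
    rcases eq_or_ne (E χ) ⊥ with h | h
    · simp [h]
    · obtain ⟨χ', hχ'⟩ := hhom χ h
      rw [← hχ']
      exact le_iSup F χ'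
  -- all joint eigenspaces of characters are nonzero
  haveI : Fintype {ψ : A →ₐ[ℂ] ℂ // F ψ ≠ ⊥} := hindF.fintypeNeBotOfFiniteDimensional
  have hSfin : {ψ : A →ₐ[ℂ] ℂ | F ψ ≠ ⊥}.Finite := Set.toFinite _
  set S : Finset (A →ₐ[ℂ] ℂ) := hSfin.toFinset with hS
  have hmemS : ∀ ψ, ψ ∈ S ↔ F ψ ≠ ⊥ := fun ψ => hSfin.mem_toFinset
  have hne : ∀ χ : A →ₐ[ℂ] ℂ, F χ ≠ ⊥ := by
    intro χ hbot
    have hch : ∀ ψ : A →ₐ[ℂ] ℂ, ∃ a : A, ψ ≠ χ → χ a ≠ ψ a := by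
      intro ψ
      rcases eq_or_ne ψ χ with rfl | h
      · exact ⟨1, fun h => absurd rfl h⟩
      · obtain ⟨a, ha⟩ := DFunLike.ne_iff.mp h
        exact ⟨a, fun _ => fun hc => ha (hc.symm)⟩
    choose aa haa using hch
    set b : A := ∏ ψ ∈ S, (aa ψ - algebraMap ℂ A (ψ (aa ψ))) with hb
    have hkill : ρ b = 0 := by
      ext x
      have hx : x ∈ ⨆ ψ : A →ₐ[ℂ] ℂ, F ψ := htopF ▸ Submodule.mem_top
      obtain ⟨c, hc, rfl⟩ := (Submodule.mem_iSup_iff_exists_finsupp _ _).mp hx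
      rw [map_finsuppSum]
      simp only [LinearMap.zero_apply]
      rw [Finsupp.sum]
      refine Finset.sum_eq_zero fun ψ _ => ?_
      rcases eq_or_ne (F ψ) ⊥ with h0 | h0
      · have : c ψ = 0 := by
          have := hc ψ; rw [h0] at this; simpa using this
        rw [this, map_zero]
      · have hψS : ψ ∈ S := (hmemS ψ).mpr h0
        rw [hb, ← Finset.prod_erase_mul S _ hψS, map_mul, Module.End.mul_apply]
        have h1 : ρ (aa ψ - algebraMap ℂ A (ψ (aa ψ))) (c ψ) = 0 := by
          rw [map_sub, LinearMap.sub_apply, AlgHom.commutes,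
            Module.algebraMap_end_apply, hmemE _ _ (hc ψ) (aa ψ), sub_self]
        rw [h1, map_zero]
    have hb0 : b = 0 := by
      apply hfaith
      rw [hkill, map_zero]
    have hχb : χ b = 0 := by rw [hb0, map_zero]
    rw [hb, map_prod] at hχb
    obtain ⟨ψ, hψS, hψ0⟩ := Finset.prod_eq_zero_iff.mp hχb
    rw [map_sub, AlgHom.commutes, sub_eq_zero] at hψ0
    have hψne : ψ ≠ χ := by
      rintro rfl
      exact (hmemS ψ).mp hψS hbot
    exact haa ψ hψne hψ0
  have hInternal : DirectSum.IsInternal F :=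
    (DirectSum.isInternal_submodule_iff_iSupIndep_and_iSup_eq_top F).mpr
      ⟨hindF, htopF⟩
  refine ⟨?_, hInternal⟩
  -- dimension one
  intro χ
  have hv' : v ∈ ⨆ ψ : A →ₐ[ℂ] ℂ, F ψ := htopF ▸ Submodule.mem_top
  obtain ⟨c, hc, hsum⟩ := (Submodule.mem_iSup_iff_exists_finsupp _ _).mp hv'
  have hle : F χ ≤ ℂ ∙ (c χ) := by
    intro w hw
    obtain ⟨a, ha⟩ := hv w
    have hw' : w = ∑ ψ ∈ c.support, ψ a • c ψ := by
      rw [← ha, ← hsum, Finsupp.sum, map_sum]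
      exact Finset.sum_congr rfl fun ψ _ => hmemE _ _ (hc ψ) a
    have hsplit : w - χ a • c χ ∈ ⨆ (ψ : A →ₐ[ℂ] ℂ) (_ : ψ ≠ χ), F ψ := by
      have hrest : w - χ a • c χ = ∑ ψ ∈ c.support.erase χ, ψ a • c ψ := by
        rcases Finset.decidableMem χ c.support with hχs | hχs
        · have : c χ = 0 := Finsupp.notMem_support_iff.mp hχs
          rw [hw', this, smul_zero, sub_zero, Finset.erase_eq_of_notMem hχs]
        · rw [hw', ← Finset.add_sum_erase _ _ hχs, add_sub_cancel_left]
      rw [hrest]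
      refine Submodule.sum_mem _ fun ψ hψ => ?_
      have hψχ : ψ ≠ χ := Finset.ne_of_mem_erase hψ
      exact Submodule.mem_iSup_of_mem ψ (Submodule.mem_iSup_of_mem hψχ
        (Submodule.smul_mem _ _ (hc ψ)))
    have hFχ : w - χ a • c χ ∈ F χ :=
      Submodule.sub_mem _ hw (Submodule.smul_mem _ _ (hc χ))
    have : w - χ a • c χ = 0 := by
      have hd := hindF χ
      rw [disjoint_iff] at hd
      have : w - χ a • c χ ∈ F χ ⊓ ⨆ (ψ : A →ₐ[ℂ] ℂ) (_ : ψ ≠ χ), F ψ :=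
        ⟨hFχ, hsplit⟩
      rw [hd] at this
      simpa using this
    have hw2 : w = χ a • c χ := by
      rw [sub_eq_zero] at this; exact this
    rw [hw2]
    exact Submodule.smul_mem _ _ (Submodule.mem_span_singleton_self _)
  have h1 : finrank ℂ (F χ) ≤ 1 := by
    refine le_trans (Submodule.finrank_mono hle) ?_
    rcases eq_or_ne (c χ) 0 with h0 | h0
    · rw [h0, Submodule.span_zero_singleton]
      simp
    · rw [finrank_span_singleton h0]
  have h2 : finrank ℂ (F χ) ≠ 0 :=
    fun h => hne χ (Submodule.finrank_eq_zero.mp h)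
  show Module.finrank ℂ (F χ) = 1
  omega
end
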